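/- Let a, c ∈ ℝ and let w : ℤ → ℝ → ℝ be a family of differentiable functions satisfying for all n ∈ ℤ and t ∈ ℝ the equation ẇ_n = (w_{n+1} − w_n + a)(w_n − w_{n−1} + a)(w_{n+2} − w_{n+1} + w_{n−1} − w_{n−2} + 2a) + c. Define u_n(t) = (w_{n+2}(t) − w_{n+1}(t) + a)(w_{n+1}(t) − w_n(t) + a). Then for all n ∈ ℤ and t ∈ ℝ, u̇_n = u_n (u_{n+2} + u_{n+1} − u_{n−1} − u_{n−2}), i.e., u solves the INB equation. -/

import Mathlib

/-- Equation `ẇₙ = (w_{n+1}−wₙ+a)(wₙ−w_{n−1}+a)(w_{n+2}−w_{n+1}+w_{n−1}−w_{n−2}+2a) + c`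
is transformed into the INB equation by `uₙ = (w_{n+2}−w_{n+1}+a)(w_{n+1}−wₙ+a)`. -/
theorem stmt_7 (a c : ℝ) (w : ℤ → ℝ → ℝ)
    (hw : ∀ (n : ℤ) (t : ℝ), HasDerivAt (w n)
      ((w (n + 1) t - w n t + a) * (w n t - w (n - 1) t + a)
        * (w (n + 2) t - w (n + 1) t + w (n - 1) t - w (n - 2) t + 2 * a) + c) t)
    (u : ℤ → ℝ → ℝ)
    (hu : ∀ (n : ℤ) (t : ℝ),
      u n t = (w (n + 2) t - w (n + 1) t + a) * (w (n + 1) t - w n t + a)) :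
    ∀ (n : ℤ) (t : ℝ), HasDerivAt (u n)
      (u n t * (u (n + 2) t + u (n + 1) t - u (n - 1) t - u (n - 2) t)) t := by
  intro n t
  have hA := ((hw (n+2) t).sub (hw (n+1) t)).add_const a
  have hB := ((hw (n+1) t).sub (hw n t)).add_const a
  have hP : HasDerivAt (fun s => (w (n+2) s - w (n+1) s + a) * (w (n+1) s - w n s + a)) _ t :=
    hA.mul hB
  have hfun : u n = fun s => (w (n+2) s - w (n+1) s + a) * (w (n+1) s - w n s + a) :=
    funext (hu n)
  rw [hfun]
  convert hP using 1
  simp only [hu, Pi.sub_apply, show n+2+1 = n+3 by ring, show n+2+2 = n+4 by ring,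
    show n+2-1 = n+1 by ring, show n+2-2 = n by ring, show n+1+1 = n+2 by ring,
    show n+1+2 = n+3 by ring, show n+1-1 = n by ring, show n+1-2 = n-1 by ring,
    show n-1+2 = n+1 by ring, show n-1+1 = n by ring, show n-2+2 = n by ring,
    show n-2+1 = n-1 by ring]
  ring
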